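/- Let N ∈ ℕ and let 𝒜 : ℕ → Submodule ℝ (MvPolynomial (Fin N) ℝ) be a grading making the real polynomial algebra in N variables a graded ℝ-algebra, and assume the grading is connected, i.e. 𝒜 0 = ℝ·1 is one-dimensional. Then there exist weights w : Fin N → ℕ with w i ≥ 1 for all i, and an ℝ-algebra automorphism e of MvPolynomial (Fin N) ℝ such that for every i ∈ ℕ the image under e of the submodule of w-weighted-homogeneous polynomials of weighted degree i equals 𝒜 i. In other words, every connected ℕ-grading of a real polynomial algebra is isomorphic as a graded algebra to a weighted grading 𝒜(ℝ^𝕕) for some 𝕕 = (d₁,…,d_r). -/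

import Mathlib

open MvPolynomial

theorem auxInj {A : Type*} [CommRing A] [IsNoetherianRing A] (f : A →+* A)
    (hf : Function.Surjective f) : Function.Injective f := by
  have hmono : Monotone fun n : ℕ => RingHom.ker (f ^ n) := by
    apply monotone_nat_of_le_succ
    intro n x hx
    have : (f ^ (n + 1)) x = f ((f ^ n) x) := by rw [pow_succ']; rfl
    simp only [RingHom.mem_ker] at hx ⊢
    rw [this, hx, map_zero]
  obtain ⟨n, hn⟩ := monotone_stabilizes_iff_noetherian.mpr
    (inferInstance : IsNoetherian A A) ⟨fun n : ℕ => RingHom.ker (f ^ n), hmono⟩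
  rw [injective_iff_map_eq_zero]
  intro x hx
  obtain ⟨b, hb⟩ := (hf.iterate n) x
  have hb' : (f ^ (n + 1)) b = 0 := by
    have : (f ^ (n + 1)) b = f ((f ^ n) b) := by rw [pow_succ']; rfl
    rw [this]
    rw [RingHom.coe_pow] at *
    rw [hb, hx]
  have : b ∈ RingHom.ker (f ^ n) := by
    have h2 := hn (n + 1) (Nat.le_succ n)
    simp only [OrderHom.coe_mk] at h2
    rw [h2]; exact hb'
  simp only [RingHom.mem_ker, RingHom.coe_pow] at this
  rw [← hb, this]

theorem auxTaylor {σ R : Type*} [CommRing R] (ψ : MvPolynomial σ R →ₐ[R] R)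
    (q : MvPolynomial σ R) :
    q - C (ψ q) ∈ Ideal.span (Set.range fun i => (X i - C (ψ (X i)) : MvPolynomial σ R)) := by
  induction q using MvPolynomial.induction_on with
  | C a =>
      have : ψ (C a) = a := by
        have : (C a : MvPolynomial σ R) = algebraMap R _ a := rfl
        rw [this, ψ.commutes]; rfl
      rw [this, sub_self]
      exact zero_mem _
  | add p q hp hq =>
      have : p + q - C (ψ (p + q)) = (p - C (ψ p)) + (q - C (ψ q)) := by
        rw [map_add, C_add]; ring
      rw [this]
      exact add_mem hp hq
  | mul_X p i hp =>
      have h1 : p * X i - C (ψ (p * X i))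
          = p * (X i - C (ψ (X i))) + C (ψ (X i)) * (p - C (ψ p)) := by
        rw [map_mul, C_mul]; ring
      rw [h1]
      exact add_mem (Ideal.mul_mem_left _ _ (Ideal.subset_span ⟨i, rfl⟩))
        (Ideal.mul_mem_left _ _ hp)

/-- Every connected ℕ-grading of the real polynomial algebra in `N` variables is
isomorphic, as a graded algebra, to a weighted grading: there are weights
`w i ≥ 1` and an algebra automorphism `e` of `ℝ[x₁,…,x_N]` carrying the submodule
of `w`-weighted-homogeneous polynomials of weighted degree `i` onto `𝒜 i`, for
every `i`. -/
theorem stmt_1 (N : ℕ) (𝒜 : ℕ → Submodule ℝ (MvPolynomial (Fin N) ℝ))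
    [GradedAlgebra 𝒜] (hconn : 𝒜 0 = Submodule.span ℝ {1}) :
    ∃ (w : Fin N → ℕ), (∀ i, 1 ≤ w i) ∧
      ∃ e : MvPolynomial (Fin N) ℝ ≃ₐ[ℝ] MvPolynomial (Fin N) ℝ,
        ∀ i : ℕ,
          Submodule.map e.toLinearMap (weightedHomogeneousSubmodule ℝ w i) = 𝒜 i := by
  classical
  set A := MvPolynomial (Fin N) ℝ with hA
  -- the "evaluation at the distinguished point" ring homomorphism
  set ψ : A →+* ℝ := (constantCoeff : A →+* ℝ).comp (GradedRing.projZeroRingHom 𝒜) with hψ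
  have hψapply : ∀ q : A, ψ q = constantCoeff ((DirectSum.decompose 𝒜 q 0 : A)) := by
    intro q; rfl
  have hψC : ∀ r : ℝ, ψ (C r) = r := by
    intro r
    have h1 : (C r : A) ∈ 𝒜 0 := by
      have : (C r : A) = r • (1 : A) := by
        rw [smul_eq_C_mul, mul_one]
      rw [this]
      exact Submodule.smul_mem _ _ (SetLike.one_mem_graded 𝒜)
    rw [hψapply, DirectSum.decompose_of_mem_same 𝒜 h1, constantCoeff_C]
  have hψpos : ∀ {x : A} {k : ℕ}, x ∈ 𝒜 k → k ≠ 0 → ψ x = 0 := by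
    intro x k hx hk
    rw [hψapply, DirectSum.decompose_of_mem_ne 𝒜 hx hk, map_zero]
  have hdec0 : ∀ q : A, ψ q = 0 → (DirectSum.decompose 𝒜 q 0 : A) = 0 := by
    intro q hq
    have hmem : (DirectSum.decompose 𝒜 q 0 : A) ∈ Submodule.span ℝ ({1} : Set A) := by
      rw [← hconn]; exact (DirectSum.decompose 𝒜 q 0).2
    rw [Submodule.mem_span_singleton] at hmem
    obtain ⟨r, hr⟩ := hmem
    rw [hψapply q] at hq
    have hcc : constantCoeff ((r • (1 : A))) = r := by
      rw [smul_eq_C_mul, mul_one, constantCoeff_C]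
    have hr0 : r = 0 := by
      rw [hr] at hcc
      rw [← hcc, hq]
    rw [← hr, hr0, zero_smul]
  -- upgrade ψ to an algebra homomorphism
  let ψa : A →ₐ[ℝ] ℝ :=
    { ψ with
      commutes' := fun r => by
        have : (algebraMap ℝ A) r = C r := rfl
        rw [RingHom.toMonoidHom_eq_coe]
        simp only [OneHom.toFun_eq_coe, MonoidHom.toOneHom_coe, MonoidHom.coe_coe, this]
        rw [hψC r]; rfl }
  have hψa : ∀ q : A, ψa q = ψ q := fun _ => rfl
  -- the distinguished point and the translated variables
  set g : Fin N → A := fun i => X i - C (ψ (X i)) with hg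
  have hgker : ∀ i, ψ (g i) = 0 := by
    intro i
    simp only [hg, map_sub, hψC]
    exact sub_self _
  have hTaylor : ∀ q : A, q - C (ψ q) ∈ Ideal.span (Set.range g) := by
    intro q
    have := auxTaylor ψa q
    simpa [hψa] using this
  -- the maximal ideal (kernel of ψ) and its square
  set W : Submodule ℝ A :=
    Submodule.restrictScalars ℝ ((RingHom.ker ψ * RingHom.ker ψ : Ideal A) : Submodule A A)
    with hW
  have hWmem : ∀ {v : A}, v ∈ W ↔ v ∈ (RingHom.ker ψ * RingHom.ker ψ : Ideal A) := fun {v} =>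
    Iff.rfl
  -- Key decomposition: every element of ker ψ is in span g + (ker ψ)²
  have hKey2 : ∀ q : A, ψ q = 0 → q ∈ Submodule.span ℝ (Set.range g) ⊔ W := by
    intro q hq
    have hq' : q ∈ Ideal.span (Set.range g) := by
      have := hTaylor q
      rwa [hq, map_zero, sub_zero] at this
    obtain ⟨c, hc⟩ := (Ideal.mem_span_range_iff_exists_fun).mp hq'
    have hterm : ∀ i : Fin N, c i * g i
        = (ψ (c i)) • g i + (c i - C (ψ (c i))) * g i := by
      intro i
      rw [smul_eq_C_mul]
      ring
    rw [← hc]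
    have : ∑ i, c i * g i
        = (∑ i, (ψ (c i)) • g i) + ∑ i, (c i - C (ψ (c i))) * g i := by
      rw [← Finset.sum_add_distrib]
      exact Finset.sum_congr rfl fun i _ => hterm i
    rw [this]
    apply Submodule.add_mem
    · apply Submodule.mem_sup_left
      exact Submodule.sum_mem _ fun i _ =>
        Submodule.smul_mem _ _ (Submodule.subset_span ⟨i, rfl⟩)
    · apply Submodule.mem_sup_right
      rw [hWmem]
      apply Ideal.sum_mem
      intro i _
      apply Ideal.mul_mem_mul
      · have : ψ (c i - C (ψ (c i))) = 0 := by
          rw [map_sub, hψC]; exact sub_self _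
        exact this
      · exact hgker i
  -- pass to the quotient A / (ker ψ)²
  set π : A →ₗ[ℝ] A ⧸ W := W.mkQ with hπdef
  have hπker : ∀ {v : A}, v ∈ W → π v = 0 := by
    intro v hv
    rwa [hπdef, ← LinearMap.mem_ker, Submodule.ker_mkQ]
  have hπspan : ∀ x : A, ψ x = 0 → π x ∈ Submodule.span ℝ (π '' Set.range g) := by
    intro x hx
    obtain ⟨u, hu, v, hv, rfl⟩ := Submodule.mem_sup.mp (hKey2 x hx)
    rw [map_add, hπker hv, add_zero]
    rw [← Submodule.map_span]
    exact Submodule.mem_map_of_mem hu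
  -- the image of the homogeneous elements of positive degree
  set t₀ : Set (A ⧸ W) := π '' {x : A | ∃ k, k ≠ 0 ∧ x ∈ 𝒜 k} with ht₀
  obtain ⟨b, hbt₀, hbspan, hbind⟩ := exists_linearIndependent ℝ t₀
  have ht₀span : t₀ ⊆ (Submodule.span ℝ (π '' Set.range g) : Set (A ⧸ W)) := by
    rintro _ ⟨x, ⟨k, hk, hxk⟩, rfl⟩
    exact hπspan x (hψpos hxk hk)
  have hbsub : (b : Set (A ⧸ W)) ⊆ (Submodule.span ℝ (π '' Set.range g) : Set (A ⧸ W)) := by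
    intro z hz
    have h1 : z ∈ Submodule.span ℝ b := Submodule.subset_span hz
    rw [hbspan] at h1
    exact Submodule.span_le.mpr ht₀span h1
  have hgfin : (π '' Set.range g).Finite := (Set.finite_range g).image π
  obtain ⟨hbfin, hbcard⟩ :=
    exists_finite_card_le_of_finite_of_linearIndependent_of_span hgfin hbind hbsub
  have hcardN : hbfin.toFinset.card ≤ N := by
    refine le_trans hbcard ?_
    have hsub : hgfin.toFinset ⊆ Finset.image (fun i => π (g i)) Finset.univ := by
      intro z hz
      rw [Set.Finite.mem_toFinset] at hz
      obtain ⟨x, ⟨i, rfl⟩, rfl⟩ := hz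
      exact Finset.mem_image.mpr ⟨i, Finset.mem_univ i, rfl⟩
    calc hgfin.toFinset.card ≤ (Finset.image (fun i => π (g i)) Finset.univ).card :=
          Finset.card_le_card hsub
      _ ≤ (Finset.univ : Finset (Fin N)).card := Finset.card_image_le
      _ = N := by simp
  -- choose homogeneous preimages
  have hsel : ∀ q ∈ b, ∃ x : A, ∃ k : ℕ, k ≠ 0 ∧ x ∈ 𝒜 k ∧ π x = q := by
    intro q hq
    obtain ⟨x, ⟨k, hk, hxk⟩, hπx⟩ := hbt₀ hq
    exact ⟨x, k, hk, hxk, hπx⟩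
  choose! xq kq hsel' using hsel
  -- build the weight function and the homogeneous generators
  obtain ⟨w, y, hw1, hyw, hcover⟩ :
      ∃ (w : Fin N → ℕ) (y : Fin N → A), (∀ j, 1 ≤ w j) ∧ (∀ j, y j ∈ 𝒜 (w j)) ∧
        ∀ q ∈ b, ∃ j : Fin N, π (y j) = q := by
    set d := hbfin.toFinset.card with hd
    set eb : Fin d → A ⧸ W := fun i => ((hbfin.toFinset.equivFin.symm i : _) : A ⧸ W) with heb
    have hebb : ∀ i, eb i ∈ b := fun i =>
      hbfin.mem_toFinset.mp (hbfin.toFinset.equivFin.symm i).2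
    refine ⟨fun j => if h : (j : ℕ) < d then kq (eb ⟨j, h⟩) else 1,
      fun j => if h : (j : ℕ) < d then xq (eb ⟨j, h⟩) else 0, ?_, ?_, ?_⟩
    · intro j
      dsimp only
      by_cases h : (j : ℕ) < d
      · rw [dif_pos h]
        exact Nat.one_le_iff_ne_zero.mpr (hsel' (eb ⟨j, h⟩) (hebb ⟨j, h⟩)).1
      · rw [dif_neg h]
    · intro j
      dsimp only
      by_cases h : (j : ℕ) < d
      · rw [dif_pos h, dif_pos h]
        exact (hsel' (eb ⟨j, h⟩) (hebb ⟨j, h⟩)).2.1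
      · rw [dif_neg h, dif_neg h]
        exact Submodule.zero_mem _
    · intro q hq
      have hqmem : q ∈ hbfin.toFinset := hbfin.mem_toFinset.mpr hq
      set i : Fin d := hbfin.toFinset.equivFin ⟨q, hqmem⟩ with hi
      refine ⟨Fin.castLE hcardN i, ?_⟩
      dsimp only
      have hlt : ((Fin.castLE hcardN i : Fin N) : ℕ) < d := by
        simpa using i.2
      rw [dif_pos hlt]
      have hfix : eb ⟨((Fin.castLE hcardN i : Fin N) : ℕ), hlt⟩ = q := by
        have : (⟨((Fin.castLE hcardN i : Fin N) : ℕ), hlt⟩ : Fin d) = i := by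
          apply Fin.ext; rfl
        rw [this, heb, hi]
        simp
      rw [hfix]
      exact (hsel' q hq).2.2
  -- the subalgebra generated by the chosen homogeneous elements
  set S : Subalgebra ℝ A := Algebra.adjoin ℝ (Set.range y) with hS
  have hySmem : ∀ j, y j ∈ S := fun j => Algebra.subset_adjoin ⟨j, rfl⟩
  have hkey : ∀ n : ℕ, ∀ a ∈ 𝒜 n, a ∈ S := by
    intro n
    induction n using Nat.strong_induction_on with
    | _ n IH =>
      intro a ha
      rcases Nat.eq_zero_or_pos n with rfl | hn
      · have ha' : a ∈ Submodule.span ℝ ({1} : Set A) := hconn ▸ ha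
        rw [Submodule.mem_span_singleton] at ha'
        obtain ⟨r, rfl⟩ := ha'
        exact S.smul_mem S.one_mem r
      · have hna : ψ a = 0 := hψpos ha (Nat.pos_iff_ne_zero.mp hn)
        have hπa : π a ∈ Submodule.span ℝ (Set.range fun j => π (y j)) := by
          have h1 : π a ∈ Submodule.span ℝ t₀ :=
            Submodule.subset_span ⟨a, ⟨n, hn.ne', ha⟩, rfl⟩
          rw [← hbspan] at h1
          have h2 : b ⊆ (Submodule.span ℝ (Set.range fun j => π (y j)) : Set (A ⧸ W)) := by
            intro q hq
            obtain ⟨j, hj⟩ := hcover q hq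
            exact Submodule.subset_span ⟨j, hj⟩
          exact Submodule.span_le.mpr h2 h1
        obtain ⟨c, hc⟩ := (Submodule.mem_span_range_iff_exists_fun ℝ).mp hπa
        have hWt : a - ∑ j, c j • y j ∈ W := by
          have hz : π (a - ∑ j, c j • y j) = 0 := by
            rw [map_sub, map_sum]
            simp_rw [map_smul]
            rw [hc, sub_self]
          rw [hπdef, Submodule.mkQ_apply, Submodule.Quotient.mk_eq_zero] at hz
          exact hz
        set Dn : A →+ A := GradedRing.proj 𝒜 n with hDn
        have hDnsmul : ∀ (r : ℝ) (x : A), Dn (r • x) = r • Dn x := by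
          intro r x
          rw [hDn]
          rw [GradedRing.proj_apply, GradedRing.proj_apply, DirectSum.decompose_smul]
          rfl
        have hDn_a : Dn a = a := by
          rw [hDn, GradedRing.proj_apply, DirectSum.decompose_of_mem_same 𝒜 ha]
        have hsplit : a = (∑ j, c j • y j) + (a - ∑ j, c j • y j) := by ring
        have ha_eq : a = (∑ j, c j • Dn (y j)) + Dn (a - ∑ j, c j • y j) := by
          have h0 : Dn ((∑ j, c j • y j) + (a - ∑ j, c j • y j))
              = (∑ j, c j • Dn (y j)) + Dn (a - ∑ j, c j • y j) := by
            rw [map_add, map_sum]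
            simp_rw [hDnsmul]
          rw [← h0, ← hsplit, hDn_a]
        rw [ha_eq]
        apply S.add_mem
        · apply S.sum_mem
          intro j _
          apply S.smul_mem
          rw [hDn, GradedRing.proj_apply]
          by_cases hwj : w j = n
          · have hyj : (DirectSum.decompose 𝒜 (y j) n : A) = y j := by
              rw [← hwj]
              exact DirectSum.decompose_of_mem_same 𝒜 (hyw j)
            rw [hyj]
            exact hySmem j
          · have hyj : (DirectSum.decompose 𝒜 (y j) n : A) = 0 :=
              DirectSum.decompose_of_mem_ne 𝒜 (hyw j) hwj
            rw [hyj]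
            exact S.zero_mem
        · have hWS : ∀ v ∈ (RingHom.ker ψ * RingHom.ker ψ : Ideal A), Dn v ∈ S := by
            intro v hv
            refine Submodule.mul_induction_on hv ?_ ?_
            · intro u hu v' hv'
              rw [hDn, GradedRing.proj_apply, DirectSum.decompose_mul,
                DirectSum.coe_mul_apply]
              apply S.sum_mem
              intro ij hij
              rw [Finset.mem_filter] at hij
              obtain ⟨_, hsum⟩ := hij
              by_cases h1 : ij.1 = 0
              · have hz : (DirectSum.decompose 𝒜 u ij.1 : A) = 0 := by
                  rw [h1]
                  exact hdec0 u (RingHom.mem_ker.mp hu)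
                rw [hz, zero_mul]
                exact S.zero_mem
              · by_cases h2 : ij.2 = 0
                · have hz : (DirectSum.decompose 𝒜 v' ij.2 : A) = 0 := by
                    rw [h2]
                    exact hdec0 v' (RingHom.mem_ker.mp hv')
                  rw [hz, mul_zero]
                  exact S.zero_mem
                · have hij1 : ij.1 < n := by omega
                  have hij2 : ij.2 < n := by omega
                  exact S.mul_mem
                    (IH ij.1 hij1 _ (DirectSum.decompose 𝒜 u ij.1).2)
                    (IH ij.2 hij2 _ (DirectSum.decompose 𝒜 v' ij.2).2)
            · intro x y' hx hy'
              rw [map_add]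
              exact S.add_mem hx hy'
          exact hWS _ (hWmem.mp hWt)
  -- the endomorphism given by the homogeneous generators is bijective
  have hsurj : Function.Surjective (aeval y : A →ₐ[ℝ] A) := by
    have hadj : Algebra.adjoin ℝ (Set.range y) = ⊤ := by
      apply top_unique
      intro x _
      have hx : x ∈ S := by
        rw [← DirectSum.sum_support_decompose 𝒜 x]
        exact S.sum_mem fun k _ => hkey k _ (DirectSum.decompose 𝒜 x k).2
      exact hx
    rw [Algebra.adjoin_range_eq_range_aeval] at hadj
    rw [← AlgHom.range_eq_top]
    exact hadj
  have hinj : Function.Injective (aeval y : A →ₐ[ℝ] A) :=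
    auxInj (aeval y : A →ₐ[ℝ] A).toRingHom hsurj
  let e : A ≃ₐ[ℝ] A := AlgEquiv.ofBijective (aeval y) ⟨hinj, hsurj⟩
  refine ⟨w, hw1, e, ?_⟩
  have hle : ∀ (i : ℕ) (x : A), x ∈ weightedHomogeneousSubmodule ℝ w i → aeval y x ∈ 𝒜 i := by
    intro i x hx
    have hx' : x.IsWeightedHomogeneous w i := hx
    have hxs : (aeval y) x = ∑ v ∈ x.support, (aeval y) (monomial v (coeff v x)) := by
      conv_lhs => rw [x.as_sum]
      rw [map_sum]
    rw [hxs]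
    apply Submodule.sum_mem
    intro v hv
    rw [aeval_monomial]
    have hweight : (Finsupp.weight w) v = i := hx' (mem_support_iff.mp hv)
    have hprod : (v.prod fun j k => y j ^ k) ∈ 𝒜 ((Finsupp.weight w) v) := by
      have h := SetLike.prod_pow_mem_graded 𝒜 (F := v.support) (g := y) (i := w)
        (fun j => v j) (fun j _ => hyw j)
      have heq : ∑ j ∈ v.support, v j • w j = (Finsupp.weight w) v := by
        rw [Finsupp.weight_apply]
        rfl
      rw [heq] at h
      exact h
    rw [hweight] at hprod
    have hsm : (algebraMap ℝ A) (coeff v x) * (v.prod fun j k => y j ^ k)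
        = (coeff v x) • (v.prod fun j k => y j ^ k) := (Algebra.smul_def _ _).symm
    rw [hsm]
    exact Submodule.smul_mem _ _ hprod
  intro i
  apply le_antisymm
  · rintro _ ⟨x, hx, rfl⟩
    exact hle i x hx
  · intro a ha
    obtain ⟨q, hq⟩ := hsurj a
    have hfin := weightedHomogeneousComponent_finsupp (w := w) q
    have hqsum : q = ∑ m ∈ hfin.toFinset, weightedHomogeneousComponent w m q := by
      conv_lhs => rw [← sum_weightedHomogeneousComponent w q]
      rw [finsum_eq_sum _ hfin]
    have hasum : a = ∑ m ∈ hfin.toFinset, (aeval y) (weightedHomogeneousComponent w m q) := by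
      rw [← hq]
      conv_lhs => rw [hqsum]
      rw [map_sum]
    have ha2 : a = (GradedRing.proj 𝒜 i) a := by
      rw [GradedRing.proj_apply, DirectSum.decompose_of_mem_same 𝒜 ha]
    have ha3 : a = if i ∈ hfin.toFinset then (aeval y) (weightedHomogeneousComponent w i q)
        else 0 := by
      calc a = (GradedRing.proj 𝒜 i) a := ha2
        _ = ∑ m ∈ hfin.toFinset,
            (GradedRing.proj 𝒜 i) ((aeval y) (weightedHomogeneousComponent w m q)) := by
              conv_lhs => rw [hasum]
              rw [map_sum]
        _ = ∑ m ∈ hfin.toFinset,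
            if m = i then (aeval y) (weightedHomogeneousComponent w i q) else 0 := by
              refine Finset.sum_congr rfl fun m _ => ?_
              rw [GradedRing.proj_apply]
              by_cases hmi : m = i
              · rw [if_pos hmi, hmi]
                exact DirectSum.decompose_of_mem_same 𝒜
                  (hle i _ (weightedHomogeneousComponent_mem w q i))
              · rw [if_neg hmi]
                exact DirectSum.decompose_of_mem_ne 𝒜
                  (hle m _ (weightedHomogeneousComponent_mem w q m)) hmi
        _ = _ := Finset.sum_ite_eq' hfin.toFinset i _
    by_cases hiT : i ∈ hfin.toFinset
    · rw [ha3, if_pos hiT]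
      exact ⟨weightedHomogeneousComponent w i q,
        weightedHomogeneousComponent_mem w q i, rfl⟩
    · rw [ha3, if_neg hiT]
      exact Submodule.zero_mem _
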